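/- arXiv:1506.08338 — 2 statements merged into one kernel-verified Lean document; each statement's English description precedes it below -/
import Mathlib

section
/- Let F : ℝⁿ → ℝᵐ, let [x̲,x̄] ⊆ ℝⁿ be a box and 𝐅 = [F̲,F̄] ⊆ ℝᵐ a box (possibly with infinite endpoints). Define Y(y,z) = inf_{F̃ ∈ 𝐅} yᵀ(F̃ − F(z)), suppose Z(y,z,w,x̲,x̄) ≥ sup_{x ∈ [x̲,x̄]} yᵀ(F(x) − F(z)), let T be a positive function, and define f = (Z − max(0, Y))/T. If there exist y ∈ ℝᵐ, z with x̲ ≤ z ≤ x̄, and w with f(y,z,w,x̲,x̄) < 0, then there is no x ∈ [x̲,x̄] with F(x) ∈ 𝐅. -/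
/-- the certificate-of-infeasibility theorem. With
`Y(y,z) = inf_{F̃ ∈ 𝐅} yᵀ(F̃ − F(z))`, `Z` dominating `sup_{x ∈ [x̲,x̄]} yᵀ(F(x) − F(z))`,
`T > 0` and `f = (Z − max(0,Y))/T`: if `f(y,z,w,x̲,x̄) < 0` for some `y`, `z ∈ [x̲,x̄]`, `w`,
then no `x ∈ [x̲,x̄]` satisfies `F(x) ∈ 𝐅`. -/
theorem certificate_of_infeasibility (n m k : ℕ)
    (F : (Fin n → ℝ) → Fin m → ℝ) (xlo xhi : Fin n → ℝ)
    (Flo Fhi : Fin m → EReal)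
    (Z T : (Fin m → ℝ) → (Fin n → ℝ) → (Fin k → ℝ) → (Fin n → ℝ) → (Fin n → ℝ) → ℝ)
    (hT : ∀ y z w, 0 < T y z w xlo xhi)
    (hZ : ∀ (y : Fin m → ℝ) (z : Fin n → ℝ) (w : Fin k → ℝ) (x : Fin n → ℝ),
      (∀ i, xlo i ≤ x i ∧ x i ≤ xhi i) →
      ∑ j, y j * (F x j - F z j) ≤ Z y z w xlo xhi)
    (y : Fin m → ℝ) (z : Fin n → ℝ) (w : Fin k → ℝ)
    (hz : ∀ i, xlo i ≤ z i ∧ z i ≤ xhi i)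
    (hf : (Z y z w xlo xhi -
        max 0 (sInf {t : ℝ | ∃ Ft : Fin m → ℝ,
          (∀ j, Flo j ≤ (Ft j : EReal) ∧ (Ft j : EReal) ≤ Fhi j) ∧
          t = ∑ j, y j * (Ft j - F z j)})) / T y z w xlo xhi < 0) :
    ¬ ∃ x : Fin n → ℝ, (∀ i, xlo i ≤ x i ∧ x i ≤ xhi i) ∧
      (∀ j, Flo j ≤ (F x j : EReal) ∧ (F x j : EReal) ≤ Fhi j) := by
  rintro ⟨x, hx, hFx⟩
  set S := {t : ℝ | ∃ Ft : Fin m → ℝ,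
      (∀ j, Flo j ≤ (Ft j : EReal) ∧ (Ft j : EReal) ≤ Fhi j) ∧
      t = ∑ j, y j * (Ft j - F z j)} with hS
  have hTpos := hT y z w
  have hZlt : Z y z w xlo xhi < max 0 (sInf S) := by
    by_contra h
    push_neg at h
    have : 0 ≤ (Z y z w xlo xhi - max 0 (sInf S)) / T y z w xlo xhi :=
      div_nonneg (by linarith) hTpos.le
    linarith
  have hZ0 : 0 ≤ Z y z w xlo xhi := by
    have := hZ y z w z hz
    simpa using this
  have hYpos : 0 < sInf S := by
    rcases max_cases 0 (sInf S) with ⟨he, _⟩ | ⟨he, hlt⟩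
    · rw [he] at hZlt; linarith
    · rw [he] at hZlt; linarith
  have hmem : (∑ j, y j * (F x j - F z j)) ∈ S := ⟨F x, hFx, rfl⟩
  have hle : sInf S ≤ ∑ j, y j * (F x j - F z j) := by
    by_cases hb : BddBelow S
    · exact csInf_le hb hmem
    · rw [Real.sInf_of_not_bddBelow hb] at hYpos; exact absurd hYpos (lt_irrefl 0)
  have hZx := hZ y z w x hx
  rw [max_eq_right hYpos.le] at hZlt
  linarith
end

section
/- Let Fₖ(x) = cₖᵀx + xᵀCₖx, and with the notation C(y), c(y,z), A(y,R,S) = C(y) + RᵀR + Sᵀ − S: for all x, z ∈ ℝⁿ, y ∈ ℝᵐ, R, S ∈ ℝⁿˣⁿ, yᵀ(F(x) − F(z)) ≤ (c(y,z)ᵀ + (x − z)ᵀA(y,R,S))(x − z). Consequently Z(y,z,R,S,x̲,x̄) := sup_{x ∈ [x̲,x̄]} (c(y,z)ᵀ + (x − z)ᵀA(y,R,S))(x − z) satisfies the inclusion property Z ≥ sup_{x ∈ [x̲,x̄]} yᵀ(F(x) − F(z)). -/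
open Matrix

/-- `C(y) = Σₖ yₖ Cₖ`. -/
def Cagg {n m : ℕ} (Cm : Fin m → Matrix (Fin n) (Fin n) ℝ) (y : Fin m → ℝ) :
    Matrix (Fin n) (Fin n) ℝ :=
  ∑ k, y k • Cm k

/-- `c(y,z) = Σₖ yₖ cₖ + (C(y) + C(y)ᵀ) z`. -/
def cagg {n m : ℕ} (Cm : Fin m → Matrix (Fin n) (Fin n) ℝ) (cv : Fin m → Fin n → ℝ)
    (y : Fin m → ℝ) (z : Fin n → ℝ) : Fin n → ℝ :=
  (∑ k, y k • cv k) + (Cagg Cm y + (Cagg Cm y)ᵀ) *ᵥ z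

/-- `A(y,R,S) = C(y) + RᵀR + Sᵀ − S`. -/
def Amat {n m : ℕ} (Cm : Fin m → Matrix (Fin n) (Fin n) ℝ) (y : Fin m → ℝ)
    (R S : Matrix (Fin n) (Fin n) ℝ) : Matrix (Fin n) (Fin n) ℝ :=
  Cagg Cm y + Rᵀ * R + Sᵀ - S

lemma my_dot_self_nonneg {n : ℕ} (v : Fin n → ℝ) : 0 ≤ v ⬝ᵥ v :=
  Finset.sum_nonneg fun i _ => mul_self_nonneg (v i)

lemma my_sum_mulVec {n m : ℕ} (A : Fin m → Matrix (Fin n) (Fin n) ℝ) (v : Fin n → ℝ) :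
    (∑ k, A k) *ᵥ v = ∑ k, A k *ᵥ v := by
  ext i
  simp only [mulVec, dotProduct, Finset.sum_apply, Matrix.sum_apply, Finset.sum_mul]
  rw [Finset.sum_comm]
  

lemma my_dot_sum {n m : ℕ} (v : Fin n → ℝ) (f : Fin m → Fin n → ℝ) :
    v ⬝ᵥ (∑ k, f k) = ∑ k, v ⬝ᵥ f k := by
  simp only [dotProduct, Finset.sum_apply, Finset.mul_sum]
  rw [Finset.sum_comm]
  

lemma my_sum_dot {n m : ℕ} (v : Fin n → ℝ) (f : Fin m → Fin n → ℝ) :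
    (∑ k, f k) ⬝ᵥ v = ∑ k, f k ⬝ᵥ v := by
  simp only [dotProduct, Finset.sum_apply, Finset.sum_mul]
  rw [Finset.sum_comm]
  

lemma my_key (n m : ℕ) (Cm : Fin m → Matrix (Fin n) (Fin n) ℝ) (cv : Fin m → Fin n → ℝ)
    (x z : Fin n → ℝ) (y : Fin m → ℝ) (R S : Matrix (Fin n) (Fin n) ℝ) :
      ∑ k, y k * ((cv k ⬝ᵥ x + x ⬝ᵥ (Cm k *ᵥ x)) - (cv k ⬝ᵥ z + z ⬝ᵥ (Cm k *ᵥ z))) ≤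
        cagg Cm cv y z ⬝ᵥ (x - z) + (x - z) ⬝ᵥ (Amat Cm y R S *ᵥ (x - z)) := by
  obtain ⟨d, rfl⟩ : ∃ d, x = z + d := ⟨x - z, by abel⟩
  have hzd : z + d - z = d := by abel
  rw [hzd]
  have hCd : Cagg Cm y *ᵥ d = ∑ k, y k • (Cm k *ᵥ d) := by
    rw [Cagg, my_sum_mulVec]
    simp [Matrix.smul_mulVec]
  have hCz : Cagg Cm y *ᵥ z = ∑ k, y k • (Cm k *ᵥ z) := by
    rw [Cagg, my_sum_mulVec]
    simp [Matrix.smul_mulVec]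
  have h1 : ∑ k, y k * ((cv k ⬝ᵥ (z + d) + (z + d) ⬝ᵥ (Cm k *ᵥ (z + d))) -
        (cv k ⬝ᵥ z + z ⬝ᵥ (Cm k *ᵥ z)))
      = cagg Cm cv y z ⬝ᵥ d + d ⬝ᵥ (Cagg Cm y *ᵥ d) := by
    have hterm : ∀ k, y k * ((cv k ⬝ᵥ (z + d) + (z + d) ⬝ᵥ (Cm k *ᵥ (z + d))) -
          (cv k ⬝ᵥ z + z ⬝ᵥ (Cm k *ᵥ z)))
        = (y k • cv k) ⬝ᵥ d + d ⬝ᵥ (y k • (Cm k *ᵥ d)) + z ⬝ᵥ (y k • (Cm k *ᵥ d))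
          + d ⬝ᵥ (y k • (Cm k *ᵥ z)) := by
      intro k
      simp only [Matrix.mulVec_add, dotProduct_add, add_dotProduct, dotProduct_smul,
        smul_dotProduct, smul_eq_mul]
      ring
    rw [Finset.sum_congr rfl (fun k _ => hterm k), Finset.sum_add_distrib,
      Finset.sum_add_distrib, Finset.sum_add_distrib, ← my_dot_sum, ← my_dot_sum,
      ← my_dot_sum d, ← hCd, ← hCz, ← my_sum_dot, cagg, add_dotProduct, add_mulVec,
      add_dotProduct, Matrix.mulVec_transpose]
    rw [Matrix.dotProduct_mulVec z (Cagg Cm y) d]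
    simp only [dotProduct_comm _ d]
    ring
  have h2 : d ⬝ᵥ (Amat Cm y R S *ᵥ d)
      = d ⬝ᵥ (Cagg Cm y *ᵥ d) + (R *ᵥ d) ⬝ᵥ (R *ᵥ d) := by
    rw [Amat, sub_mulVec, add_mulVec, add_mulVec, dotProduct_sub, dotProduct_add,
      dotProduct_add, ← Matrix.mulVec_mulVec, Matrix.dotProduct_mulVec d Rᵀ,
      Matrix.vecMul_transpose, Matrix.mulVec_transpose,
      dotProduct_comm d (d ᵥ* S), ← Matrix.dotProduct_mulVec d S]
    ring
  rw [h1, h2]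
  have := my_dot_self_nonneg (R *ᵥ d)
  linarith

/-- for the quadratic system `Fₖ(x) = cₖᵀx + xᵀCₖx`,
`yᵀ(F(x) − F(z)) ≤ (c(y,z)ᵀ + (x − z)ᵀA(y,R,S))(x − z)` for all `x, z, y, R, S`;
consequently `Z := sup_{x ∈ [x̲,x̄]} (c(y,z)ᵀ + (x − z)ᵀA(y,R,S))(x − z)` satisfies the
inclusion property `Z ≥ sup_{x ∈ [x̲,x̄]} yᵀ(F(x) − F(z))`. -/
theorem quadratic_certificate_bound (n m : ℕ)
    (Cm : Fin m → Matrix (Fin n) (Fin n) ℝ) (cv : Fin m → Fin n → ℝ) :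
    (∀ (x z : Fin n → ℝ) (y : Fin m → ℝ) (R S : Matrix (Fin n) (Fin n) ℝ),
      ∑ k, y k * ((cv k ⬝ᵥ x + x ⬝ᵥ (Cm k *ᵥ x)) - (cv k ⬝ᵥ z + z ⬝ᵥ (Cm k *ᵥ z))) ≤
        cagg Cm cv y z ⬝ᵥ (x - z) + (x - z) ⬝ᵥ (Amat Cm y R S *ᵥ (x - z))) ∧
    ∀ (z : Fin n → ℝ) (y : Fin m → ℝ) (R S : Matrix (Fin n) (Fin n) ℝ)
      (xlo xhi : Fin n → ℝ) (x : Fin n → ℝ), (∀ i, xlo i ≤ x i ∧ x i ≤ xhi i) →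
      ∑ k, y k * ((cv k ⬝ᵥ x + x ⬝ᵥ (Cm k *ᵥ x)) - (cv k ⬝ᵥ z + z ⬝ᵥ (Cm k *ᵥ z))) ≤
        sSup {t : ℝ | ∃ x' : Fin n → ℝ, (∀ i, xlo i ≤ x' i ∧ x' i ≤ xhi i) ∧
          t = cagg Cm cv y z ⬝ᵥ (x' - z) + (x' - z) ⬝ᵥ (Amat Cm y R S *ᵥ (x' - z))} := by
  refine ⟨fun x z y R S => my_key n m Cm cv x z y R S, ?_⟩
  intro z y R S xlo xhi x hx
  set f : (Fin n → ℝ) → ℝ := fun x' =>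
    cagg Cm cv y z ⬝ᵥ (x' - z) + (x' - z) ⬝ᵥ (Amat Cm y R S *ᵥ (x' - z)) with hf
  have hset : {t : ℝ | ∃ x' : Fin n → ℝ, (∀ i, xlo i ≤ x' i ∧ x' i ≤ xhi i) ∧
      t = cagg Cm cv y z ⬝ᵥ (x' - z) + (x' - z) ⬝ᵥ (Amat Cm y R S *ᵥ (x' - z))}
      = f '' Set.Icc xlo xhi := by
    ext t
    constructor
    · rintro ⟨x', hx', rfl⟩
      exact ⟨x', ⟨fun i => (hx' i).1, fun i => (hx' i).2⟩, rfl⟩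
    · rintro ⟨x', ⟨h1, h2⟩, rfl⟩
      exact ⟨x', fun i => ⟨h1 i, h2 i⟩, rfl⟩
  have hcont : Continuous f := by
    rw [hf]
    simp only [dotProduct, mulVec]
    fun_prop
  have hbdd : BddAbove (f '' Set.Icc xlo xhi) :=
    ((isCompact_Icc).image hcont).bddAbove
  have hmem : f x ∈ f '' Set.Icc xlo xhi :=
    ⟨x, ⟨fun i => (hx i).1, fun i => (hx i).2⟩, rfl⟩
  rw [hset]
  exact le_trans (my_key n m Cm cv x z y R S) (le_csSup hbdd hmem)
end
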